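/- Cancellation of implication premise: if A⇒B ≡ A⇒C, then B ≡ C. -/

import Mathlib

/-- Types: A ::= τ | A ⇒ A | A ∧ A -/
inductive Ty : Type
  | tau : Ty
  | imp : Ty → Ty → Ty
  | conj : Ty → Ty → Ty
  deriving DecidableEq

/-- Type equivalence ≡: smallest congruence with the four isomorphisms. -/
inductive TyEq : Ty → Ty → Prop
  | refl (A) : TyEq A A
  | symm {A B} : TyEq A B → TyEq B A
  | trans {A B C} : TyEq A B → TyEq B C → TyEq A C
  | impCongr {A A' B B'} : TyEq A A' → TyEq B B' → TyEq (.imp A B) (.imp A' B')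
  | conjCongr {A A' B B'} : TyEq A A' → TyEq B B' → TyEq (.conj A B) (.conj A' B')
  | comm (A B) : TyEq (.conj A B) (.conj B A)
  | assoc (A B C) : TyEq (.conj A (.conj B C)) (.conj (.conj A B) C)
  | dist (A B C) : TyEq (.imp A (.conj B C)) (.conj (.imp A B) (.imp A C))
  | curry (A B C) : TyEq (.imp (.conj A B) C) (.imp A (.imp B C))

/-- Add premise `a` to a prime factor: τ becomes a⇒τ (convention a∧∅ = a),
    c⇒τ becomes (a∧c)⇒τ. -/
def addPrem (a : Ty) : Ty → Ty
  | .tau => .imp a .tau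
  | .imp c .tau => .imp (.conj a c) .tau
  | t => t

/-- Multiset of prime factors. -/
def PF : Ty → Multiset Ty
  | .tau => {.tau}
  | .imp a b => (PF b).map (addPrem a)
  | .conj a b => PF a + PF b

def Ty.enc : Ty → ℕ
  | .tau => 0
  | .imp a b => Nat.pair a.enc b.enc * 3 + 1
  | .conj a b => Nat.pair a.enc b.enc * 3 + 2

theorem Ty.enc_injective : Function.Injective Ty.enc := by
  intro a
  induction a with
  | tau =>
    intro b h
    cases b with
    | tau => rfl
    | imp b₁ b₂ => simp only [Ty.enc] at h; omega
    | conj b₁ b₂ => simp only [Ty.enc] at h; omega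
  | imp a₁ a₂ ih₁ ih₂ =>
    intro b h
    cases b with
    | tau => simp only [Ty.enc] at h; omega
    | conj b₁ b₂ => simp only [Ty.enc] at h; omega
    | imp b₁ b₂ =>
      simp only [Ty.enc] at h
      have hp : Nat.pair a₁.enc a₂.enc = Nat.pair b₁.enc b₂.enc := by omega
      rw [Nat.pair_eq_pair] at hp
      rw [ih₁ hp.1, ih₂ hp.2]
  | conj a₁ a₂ ih₁ ih₂ =>
    intro b h
    cases b with
    | tau => simp only [Ty.enc] at h; omega
    | imp b₁ b₂ => simp only [Ty.enc] at h; omega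
    | conj b₁ b₂ =>
      simp only [Ty.enc] at h
      have hp : Nat.pair a₁.enc a₂.enc = Nat.pair b₁.enc b₂.enc := by omega
      rw [Nat.pair_eq_pair] at hp
      rw [ih₁ hp.1, ih₂ hp.2]

noncomputable instance : LinearOrder Ty := LinearOrder.lift' Ty.enc Ty.enc_injective

/-! ### conjunction of a list -/

def canonL : List Ty → Ty
  | [] => .tau
  | [a] => a
  | a :: b :: l => .conj a (canonL (b :: l))

theorem canonL_cons (a : Ty) {l : List Ty} (h : l ≠ []) :
    canonL (a :: l) = .conj a (canonL l) := by
  cases l with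
  | nil => exact absurd rfl h
  | cons b l => rfl

theorem tyEq_canonL_perm : ∀ {l l' : List Ty}, l.Perm l' → TyEq (canonL l) (canonL l') := by
  intro l l' h
  induction h with
  | nil => exact TyEq.refl _
  | cons a h ih =>
    rename_i l₁ l₂
    cases l₁ with
    | nil =>
      cases l₂ with
      | nil => exact TyEq.refl _
      | cons => exact absurd (List.Perm.nil_eq h) (by simp)
    | cons x xs =>
      cases l₂ with
      | nil => exact absurd (List.Perm.nil_eq h.symm) (by simp)
      | cons y ys =>
        rw [canonL_cons a (by simp), canonL_cons a (by simp)]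
        exact TyEq.conjCongr (TyEq.refl a) ih
  | swap a b l =>
    cases l with
    | nil => exact TyEq.comm b a
    | cons x xs =>
      rw [canonL_cons b (by simp), canonL_cons a (by simp),
          canonL_cons a (by simp), canonL_cons b (by simp)]
      exact TyEq.trans (TyEq.assoc b a _)
        (TyEq.trans (TyEq.conjCongr (TyEq.comm b a) (TyEq.refl _))
          (TyEq.symm (TyEq.assoc a b _)))
  | trans _ _ ih₁ ih₂ => exact TyEq.trans ih₁ ih₂

theorem tyEq_conj_canonL : ∀ {l l' : List Ty}, l ≠ [] → l' ≠ [] →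
    TyEq (.conj (canonL l) (canonL l')) (canonL (l ++ l')) := by
  intro l
  induction l with
  | nil => intro l' h; exact absurd rfl h
  | cons a l ih =>
    intro l' _ hl'
    cases l with
    | nil =>
      simpa [canonL, canonL_cons a hl'] using TyEq.refl (Ty.conj a (canonL l'))
    | cons b l =>
      rw [canonL_cons a (by simp), List.cons_append,
          canonL_cons a (by simp [hl'])]
      exact TyEq.trans (TyEq.symm (TyEq.assoc a (canonL (b :: l)) (canonL l')))
        (TyEq.conjCongr (TyEq.refl a) (ih (by simp) hl'))

/-! ### prime factor split and canonical form -/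

def pfOf : Ty → List Ty
  | .conj a b => pfOf a ++ pfOf b
  | t => [t]

def pfM (t : Ty) : Multiset Ty := (pfOf t : Multiset Ty)

theorem pfOf_ne_nil : ∀ t : Ty, pfOf t ≠ [] := by
  intro t
  induction t with
  | tau => simp [pfOf]
  | imp a b => simp [pfOf]
  | conj a b iha ihb => simp [pfOf, iha]

def notConj : Ty → Prop
  | .conj _ _ => False
  | _ => True

theorem pfOf_notConj : ∀ t : Ty, ∀ p ∈ pfOf t, notConj p := by
  intro t
  induction t with
  | tau => intro p hp; simp [pfOf] at hp; subst hp; trivial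
  | imp a b => intro p hp; simp [pfOf] at hp; subst hp; trivial
  | conj a b iha ihb =>
    intro p hp
    simp only [pfOf, List.mem_append] at hp
    rcases hp with hp | hp
    · exact iha p hp
    · exact ihb p hp

theorem tyEq_pfOf : ∀ t : Ty, TyEq t (canonL (pfOf t)) := by
  intro t
  induction t with
  | tau => exact TyEq.refl _
  | imp a b => exact TyEq.refl _
  | conj a b iha ihb =>
    exact TyEq.trans (TyEq.conjCongr iha ihb)
      (tyEq_conj_canonL (pfOf_ne_nil a) (pfOf_ne_nil b))

theorem pfOf_canonL : ∀ {l : List Ty}, l ≠ [] → (∀ p ∈ l, notConj p) →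
    pfOf (canonL l) = l := by
  intro l
  induction l with
  | nil => intro h; exact absurd rfl h
  | cons a l ih =>
    intro _ hnc
    cases l with
    | nil =>
      have ha := hnc a (by simp)
      cases a with
      | tau => rfl
      | imp c d => rfl
      | conj c d => exact absurd ha (by simp [notConj])
    | cons b l =>
      rw [canonL_cons a (by simp)]
      have ha := hnc a (by simp)
      have hrec := ih (by simp) (fun p hp => hnc p (by simp [hp]))
      cases a with
      | tau => simp [pfOf, hrec]
      | imp c d => simp [pfOf, hrec]
      | conj c d => exact absurd ha (by simp [notConj])

noncomputable def canon (m : Multiset Ty) : Ty := canonL (m.sort (· ≤ ·))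

theorem sort_ne_nil {m : Multiset Ty} (h : m ≠ 0) : m.sort (· ≤ ·) ≠ [] := by
  intro hc
  apply h
  have := Multiset.sort_eq (α := Ty) m (· ≤ ·)
  rw [hc] at this
  simpa using this.symm

theorem pfM_canon {m : Multiset Ty} (h : m ≠ 0) (hnc : ∀ p ∈ m, notConj p) :
    pfM (canon m) = m := by
  unfold pfM canon
  rw [pfOf_canonL (sort_ne_nil h) (fun p hp => hnc p ((Multiset.mem_sort _).mp hp))]
  exact Multiset.sort_eq m _

theorem canon_inj {m n : Multiset Ty} (hm : m ≠ 0) (hmnc : ∀ p ∈ m, notConj p)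
    (hn : n ≠ 0) (hnnc : ∀ p ∈ n, notConj p) (h : canon m = canon n) : m = n := by
  rw [← pfM_canon hm hmnc, ← pfM_canon hn hnnc, h]

theorem tyEq_canonL_canon (l : List Ty) : TyEq (canonL l) (canon (l : Multiset Ty)) := by
  apply tyEq_canonL_perm
  rw [← Multiset.coe_eq_coe, Multiset.sort_eq]

/-! ### normalized prime factors -/

noncomputable def addPremN (m : Multiset Ty) : Ty → Ty
  | .tau => .imp (canon m) .tau
  | .imp c .tau => .imp (canon (m + pfM c)) .tau
  | t => t

noncomputable def NPF : Ty → Multiset Ty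
  | .tau => {.tau}
  | .imp a b => (NPF b).map (addPremN (NPF a))
  | .conj a b => NPF a + NPF b

def NPrime (p : Ty) : Prop :=
  p = .tau ∨ ∃ c, p = .imp c .tau ∧ canon (pfM c) = c

theorem NPrime.notConj {p : Ty} (h : NPrime p) : notConj p := by
  rcases h with rfl | ⟨c, rfl, _⟩ <;> trivial

theorem pfM_ne_zero (t : Ty) : pfM t ≠ 0 := by
  simp [pfM, Multiset.coe_eq_zero, pfOf_ne_nil t]

theorem pfM_notConj (t : Ty) : ∀ p ∈ pfM t, notConj p := by
  intro p hp
  exact pfOf_notConj t p (by simpa [pfM] using hp)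

theorem NPF_ne_zero : ∀ t : Ty, NPF t ≠ 0 := by
  intro t
  induction t with
  | tau => simp [NPF]
  | imp a b iha ihb => simp [NPF, Multiset.map_eq_zero, ihb]
  | conj a b iha ihb => simp [NPF, iha]

theorem addPremN_prime {m : Multiset Ty} (hm : m ≠ 0) (hmnc : ∀ p ∈ m, notConj p)
    {p : Ty} (hp : NPrime p) : NPrime (addPremN m p) := by
  rcases hp with rfl | ⟨c, rfl, hc⟩
  · refine Or.inr ⟨canon m, rfl, ?_⟩
    rw [pfM_canon hm hmnc]
  · refine Or.inr ⟨canon (m + pfM c), rfl, ?_⟩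
    rw [pfM_canon]
    · simp [hm]
    · intro p hp
      rcases Multiset.mem_add.mp hp with h | h
      · exact hmnc p h
      · exact pfM_notConj c p h

theorem NPF_prime : ∀ t : Ty, ∀ p ∈ NPF t, NPrime p := by
  intro t
  induction t with
  | tau =>
    intro p hp
    simp only [NPF, Multiset.mem_singleton] at hp
    exact Or.inl hp
  | imp a b iha ihb =>
    intro p hp
    simp only [NPF, Multiset.mem_map] at hp
    obtain ⟨q, hq, rfl⟩ := hp
    exact addPremN_prime (NPF_ne_zero a) (fun r hr => (iha r hr).notConj) (ihb q hq)
  | conj a b iha ihb =>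
    intro p hp
    simp only [NPF] at hp
    rcases Multiset.mem_add.mp hp with h | h
    · exact iha p h
    · exact ihb p h

theorem NPF_notConj (t : Ty) : ∀ p ∈ NPF t, notConj p :=
  fun p hp => (NPF_prime t p hp).notConj

/-! ### key equation for curry -/

theorem addPremN_add {m n : Multiset Ty} (hn : n ≠ 0) (hnnc : ∀ p ∈ n, notConj p)
    (p : Ty) : addPremN (m + n) p = addPremN m (addPremN n p) := by
  cases p with
  | tau =>
    show Ty.imp (canon (m + n)) .tau = addPremN m (.imp (canon n) .tau)
    show Ty.imp (canon (m + n)) .tau = .imp (canon (m + pfM (canon n))) .tau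
    rw [pfM_canon hn hnnc]
  | conj c d => rfl
  | imp c d =>
    cases d with
    | tau =>
      show Ty.imp (canon (m + n + pfM c)) .tau
          = addPremN m (.imp (canon (n + pfM c)) .tau)
      show Ty.imp (canon (m + n + pfM c)) .tau
          = .imp (canon (m + pfM (canon (n + pfM c)))) .tau
      rw [pfM_canon (by simp [hn]) ?_, add_assoc]
      intro q hq
      rcases Multiset.mem_add.mp hq with h | h
      · exact hnnc q h
      · exact pfM_notConj c q h
    | imp => rfl
    | conj => rfl

/-! ### soundness -/

theorem NPF_sound {X Y : Ty} (h : TyEq X Y) : NPF X = NPF Y := by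
  induction h with
  | refl => rfl
  | symm _ ih => exact ih.symm
  | trans _ _ ih₁ ih₂ => exact ih₁.trans ih₂
  | impCongr _ _ ih₁ ih₂ => simp only [NPF, ih₁, ih₂]
  | conjCongr _ _ ih₁ ih₂ => simp only [NPF, ih₁, ih₂]
  | comm A B => simp only [NPF]; exact add_comm _ _
  | assoc A B C => simp only [NPF]; exact (add_assoc _ _ _).symm
  | dist A B C => simp only [NPF, Multiset.map_add]
  | curry A B C =>
    simp only [NPF, Multiset.map_map]
    apply Multiset.map_congr rfl
    intro p _
    exact addPremN_add (NPF_ne_zero B) (NPF_notConj B) p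

/-! ### completeness -/

theorem tyEq_imp_prime {m : Multiset Ty} (hm : m ≠ 0) (p : Ty)
    (hp : p = Ty.tau ∨ ∃ c d, p = .imp c d ∧ d = .tau) :
    TyEq (.imp (canon m) p) (addPremN m p) := by
  rcases hp with rfl | ⟨c, d, rfl, rfl⟩
  · exact TyEq.refl _
  · show TyEq (.imp (canon m) (.imp c .tau)) (.imp (canon (m + pfM c)) .tau)
    refine TyEq.trans (TyEq.symm (TyEq.curry (canon m) c .tau)) ?_
    refine TyEq.impCongr ?_ (TyEq.refl _)
    refine TyEq.trans (TyEq.conjCongr (TyEq.refl (canon m)) (tyEq_pfOf c)) ?_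
    refine TyEq.trans (tyEq_conj_canonL (sort_ne_nil hm) (pfOf_ne_nil c)) ?_
    refine TyEq.trans (tyEq_canonL_canon _) ?_
    have : ((m.sort (· ≤ ·) ++ pfOf c : List Ty) : Multiset Ty) = m + pfM c := by
      show ((m.sort (· ≤ ·) : List Ty) : Multiset Ty) + (pfOf c : Multiset Ty) = m + pfM c
      rw [Multiset.sort_eq]
      rfl
    rw [this]
    exact TyEq.refl _

theorem NPrime.shape {p : Ty} (h : NPrime p) :
    p = Ty.tau ∨ ∃ c d, p = .imp c d ∧ d = .tau := by
  rcases h with rfl | ⟨c, rfl, _⟩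
  · exact Or.inl rfl
  · exact Or.inr ⟨c, _, rfl, rfl⟩

theorem tyEq_imp_canonL {m : Multiset Ty} (hm : m ≠ 0) :
    ∀ {l : List Ty}, l ≠ [] → (∀ p ∈ l, NPrime p) →
    TyEq (.imp (canon m) (canonL l)) (canonL (l.map (addPremN m))) := by
  intro l
  induction l with
  | nil => intro h; exact absurd rfl h
  | cons a l ih =>
    intro _ hpr
    cases l with
    | nil =>
      simpa [canonL] using tyEq_imp_prime (m := m) hm a (hpr a (by simp)).shape
    | cons b l =>
      rw [canonL_cons a (by simp), List.map_cons,
          canonL_cons (addPremN m a) (by simp)]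
      refine TyEq.trans (TyEq.dist (canon m) a (canonL (b :: l))) ?_
      refine TyEq.conjCongr (tyEq_imp_prime hm a (hpr a (by simp)).shape) ?_
      exact ih (by simp) (fun p hp => hpr p (by simp [hp]))

theorem tyEq_canon_NPF : ∀ t : Ty, TyEq t (canon (NPF t)) := by
  intro t
  induction t with
  | tau =>
    show TyEq Ty.tau (canon {Ty.tau})
    have h : ({Ty.tau} : Multiset Ty) = (([Ty.tau] : List Ty) : Multiset Ty) := rfl
    rw [show canon {Ty.tau} = canon (([Ty.tau] : List Ty) : Multiset Ty) from rfl]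
    exact tyEq_canonL_canon [Ty.tau]
  | conj a b iha ihb =>
    show TyEq (Ty.conj a b) (canon (NPF a + NPF b))
    refine TyEq.trans (TyEq.conjCongr iha ihb) ?_
    refine TyEq.trans (tyEq_conj_canonL (sort_ne_nil (NPF_ne_zero a))
      (sort_ne_nil (NPF_ne_zero b))) ?_
    refine TyEq.trans (tyEq_canonL_canon _) ?_
    have : (((NPF a).sort (· ≤ ·) ++ (NPF b).sort (· ≤ ·) : List Ty) : Multiset Ty)
        = NPF a + NPF b := by
      show (((NPF a).sort (· ≤ ·) : List Ty) : Multiset Ty)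
          + (((NPF b).sort (· ≤ ·) : List Ty) : Multiset Ty) = NPF a + NPF b
      rw [Multiset.sort_eq, Multiset.sort_eq]
    rw [this]
    exact TyEq.refl _
  | imp a b iha ihb =>
    show TyEq (Ty.imp a b) (canon ((NPF b).map (addPremN (NPF a))))
    refine TyEq.trans (TyEq.impCongr iha ihb) ?_
    refine TyEq.trans (tyEq_imp_canonL (NPF_ne_zero a)
      (sort_ne_nil (NPF_ne_zero b))
      (fun p hp => NPF_prime b p ((Multiset.mem_sort _).mp hp))) ?_
    refine TyEq.trans (tyEq_canonL_canon _) ?_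
    have : ((((NPF b).sort (· ≤ ·)).map (addPremN (NPF a)) : List Ty) : Multiset Ty)
        = (NPF b).map (addPremN (NPF a)) := by
      rw [← Multiset.map_coe, Multiset.sort_eq]
    rw [this]
    exact TyEq.refl _

/-! ### injectivity of addPremN on primes -/

theorem addPremN_injOn {m : Multiset Ty} (hm : m ≠ 0) (hmnc : ∀ p ∈ m, notConj p)
    {p q : Ty} (hp : NPrime p) (hq : NPrime q)
    (h : addPremN m p = addPremN m q) : p = q := by
  have good : ∀ c : Ty, (m + pfM c) ≠ 0 ∧ ∀ r ∈ m + pfM c, notConj r := by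
    intro c
    refine ⟨by simp [hm], ?_⟩
    intro r hr
    rcases Multiset.mem_add.mp hr with h | h
    · exact hmnc r h
    · exact pfM_notConj c r h
  rcases hp with rfl | ⟨c, rfl, hc⟩ <;> rcases hq with rfl | ⟨c', rfl, hc'⟩
  · rfl
  · exfalso
    simp only [addPremN] at h
    have hcan : canon m = canon (m + pfM c') := (Ty.imp.inj h).1
    have heq := canon_inj hm hmnc (good c').1 (good c').2 hcan
    have hz : pfM c' = 0 := by
      have h2 : m + 0 = m + pfM c' := by simpa using heq
      exact (add_left_cancel h2).symm
    exact pfM_ne_zero c' hz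
  · exfalso
    simp only [addPremN] at h
    have hcan : canon (m + pfM c) = canon m := (Ty.imp.inj h).1
    have heq := canon_inj (good c).1 (good c).2 hm hmnc hcan
    have hz : pfM c = 0 := by
      have h2 : m + pfM c = m + 0 := by simpa using heq
      exact add_left_cancel h2
    exact pfM_ne_zero c hz
  · simp only [addPremN] at h
    have h1 : canon (m + pfM c) = canon (m + pfM c') := (Ty.imp.inj h).1
    have h2 := canon_inj (good c).1 (good c).2 (good c').1 (good c').2 h1
    have h3 : pfM c = pfM c' := add_left_cancel h2
    rw [← hc, ← hc', h3]

theorem map_injOn_cancel {f : Ty → Ty} :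
    ∀ (s t : Multiset Ty), (∀ p ∈ s, ∀ q ∈ t, f p = f q → p = q) →
    s.map f = t.map f → s = t := by
  intro s
  induction s using Multiset.induction with
  | empty =>
    intro t _ h
    simp only [Multiset.map_zero] at h
    exact (Multiset.map_eq_zero.mp h.symm).symm
  | cons a s ih =>
    intro t hinj h
    have hfa : f a ∈ t.map f := by
      rw [← h]; simp
    obtain ⟨b, hb, hfb⟩ := Multiset.mem_map.mp hfa
    have hab : a = b := hinj a (by simp) b hb hfb.symm
    subst hab
    have ht : a ::ₘ t.erase a = t := Multiset.cons_erase hb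
    rw [← ht] at h
    simp only [Multiset.map_cons] at h
    have h' : s.map f = (t.erase a).map f := (Multiset.cons_inj_right _).mp h
    rw [← ht]
    have hs : s = t.erase a :=
      ih (t.erase a)
        (fun p hp q hq => hinj p (Multiset.mem_cons_of_mem hp) q (Multiset.mem_of_mem_erase hq))
        h'
    rw [hs]


/-- Lemma 8: cancellation of implication premise. -/
theorem imp_cancel (A B C : Ty) (h : TyEq (.imp A B) (.imp A C)) :
    TyEq B C := by
  have h1 := NPF_sound h
  simp only [NPF] at h1
  have h2 : NPF B = NPF C := by
    refine map_injOn_cancel _ _ ?_ h1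
    intro p hp q hq
    exact addPremN_injOn (NPF_ne_zero A) (NPF_notConj A) (NPF_prime B p hp)
      (NPF_prime C q hq)
  refine TyEq.trans (tyEq_canon_NPF B) ?_
  rw [h2]
  exact TyEq.symm (tyEq_canon_NPF C)
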